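/- Let a > 0 and define the sequence F(1) = n(1+a) and for k ≥ 2, F satisfies the recurrence F_{i+1}(k) = F_i(k)(1 − (k−2+a)/((a+1)i+a)) + F_i(k−1)(k−1+a)/((a+1)i+a) with F_i(k) = 0 for i < k−1. Then for some constant C, F_n(k) = ((a+1)Γ(2a+1)Γ(k+a))/(Γ(a+1)Γ(k+2a)) · n · (1 + θ) where |θ| ≤ C(k−1)^{1+a}/n. -/

import Mathlib

open Real

noncomputable def Mb (a : ℝ) : ℕ → ℝ
  | 0 => 0
  | 1 => 0
  | (k+2) => (Mb a (k+1) * ((k : ℝ) + 1 + 2*a) + a) / ((k : ℝ) + a)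

lemma Mb_nonneg (a : ℝ) (ha : 0 < a) : ∀ k, 0 ≤ Mb a k := by
  intro k
  induction k with
  | zero => simp [Mb]
  | succ k ih =>
    match k, ih with
    | 0, _ => simp [Mb]
    | (m+1), ih =>
      show 0 ≤ (Mb a (m+1) * ((m : ℝ) + 1 + 2*a) + a) / ((m : ℝ) + a)
      have h1 : (0:ℝ) ≤ (m : ℝ) + 1 + 2*a := by positivity
      have h2 : (0:ℝ) < (m : ℝ) + a := by positivity
      have := mul_nonneg ih h1
      positivity

lemma Mb_rec (a : ℝ) (ha : 0 < a) (j : ℕ) :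
    Mb a (j+2) * ((j : ℝ) + a) = Mb a (j+1) * ((j : ℝ) + 1 + 2*a) + a := by
  have h2 : ((j : ℝ) + a) ≠ 0 := by positivity
  show (Mb a (j+1) * ((j : ℝ) + 1 + 2*a) + a) / ((j : ℝ) + a) * ((j : ℝ) + a)
      = Mb a (j+1) * ((j : ℝ) + 1 + 2*a) + a
  field_simp

lemma Mb_lb (a : ℝ) (ha : 0 < a) : ∀ j : ℕ, (j : ℝ) ≤ Mb a (j+1) := by
  intro j
  induction j with
  | zero => simp [Mb]
  | succ j ih =>
    have h2 : (0:ℝ) < (j : ℝ) + a := by positivity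
    have hrec := Mb_rec a ha j
    rw [show ((j+1:ℕ) : ℝ) = (j:ℝ)+1 by push_cast; ring]
    have hj : (0:ℝ) ≤ (j:ℝ) := by positivity
    nlinarith [mul_le_mul_of_nonneg_right ih (show (0:ℝ) ≤ (j : ℝ) + 1 + 2*a by positivity)]

lemma Mb_two (a : ℝ) (ha : 0 < a) : Mb a 2 = 1 := by
  have h : Mb a 2 = (Mb a 1 * (((0:ℕ):ℝ) + 1 + 2*a) + a) / (((0:ℕ):ℝ) + a) := rfl
  rw [h, show Mb a 1 = (0:ℝ) from rfl]
  rw [zero_mul, zero_add, Nat.cast_zero, zero_add]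
  exact div_self ha.ne'

lemma Mb_ub (a : ℝ) (ha : 0 < a) : ∀ j : ℕ, Mb a (j+1) ≤ (j : ℝ) ^ (1+a) := by
  intro j
  induction j with
  | zero => simp [Mb, Real.zero_rpow (by positivity : (1:ℝ)+a ≠ 0)]
  | succ j ih =>
    match j, ih with
    | 0, _ =>
      rw [Mb_two a ha]
      norm_num
    | (m+1), ih =>
      set t : ℝ := (m : ℝ) + 1 with ht
      have hm0 : (0:ℝ) ≤ (m:ℝ) := Nat.cast_nonneg m
      have ht1 : (1:ℝ) ≤ t := by rw [ht]; linarith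
      have htp : (0:ℝ) < t := by linarith
      have hIH : Mb a (m+2) ≤ t ^ (1+a) := by
        have hc : ((m+1:ℕ):ℝ) = t := by push_cast; ring
        rwa [hc] at ih
      have hta : t ^ (1+a) = t * t ^ a := by
        rw [Real.rpow_add htp, Real.rpow_one]
      have hge1 : (1:ℝ) ≤ t ^ a := Real.one_le_rpow ht1 ha.le
      have hinv : (0:ℝ) ≤ 1/t := by positivity
      have hB : 1 + (1+a) * (1/t) ≤ (1 + 1/t) ^ (1+a) :=
        one_add_mul_self_le_rpow_one_add (by linarith) (by linarith)
      have hmul : (t+1) ^ (1+a) = t ^ (1+a) * (1 + 1/t) ^ (1+a) := by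
        rw [← Real.mul_rpow htp.le (by positivity)]
        congr 1
        field_simp
      have hbig : t ^ (1+a) + (1+a) * t ^ a ≤ (t+1) ^ (1+a) := by
        rw [hmul]
        have hmm := mul_le_mul_of_nonneg_left hB (by positivity : (0:ℝ) ≤ t ^ (1+a))
        calc t ^ (1+a) + (1+a) * t ^ a
            = t ^ (1+a) * (1 + (1+a) * (1/t)) := by
              rw [hta]; field_simp
          _ ≤ t ^ (1+a) * (1 + 1/t) ^ (1+a) := hmm
      have hrec := Mb_rec a ha (m+1)
      have hcast : ((m+1:ℕ):ℝ) = t := by push_cast; ring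
      rw [hcast] at hrec
      have hd : (0:ℝ) < t + a := by linarith
      have hgoalcast : ((m+1+1:ℕ):ℝ) = t + 1 := by push_cast; ring
      rw [hgoalcast]
      -- goal : Mb a (m+1+1+1) ≤ (t+1)^(1+a)
      have hMM : Mb a (m+1+1+1) * (t+a) = Mb a (m+2) * (t + 1 + 2*a) + a := hrec
      have hMnn := Mb_nonneg a ha (m+2)
      rw [hta] at hIH hbig
      have key : Mb a (m+2) * (t + 1 + 2*a) + a ≤ (t+1)^(1+a) * (t + a) := by
        nlinarith [mul_le_mul_of_nonneg_right hIH
            (show (0:ℝ) ≤ t + 1 + 2*a by linarith),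
          mul_le_mul_of_nonneg_right hbig hd.le,
          mul_le_mul_of_nonneg_left hge1 (show (0:ℝ) ≤ a*(1+a) by positivity)]
      have := hMM.trans_le key
      exact le_of_mul_le_mul_right (by linarith [this]) hd

noncomputable def cseq (a : ℝ) (k : ℕ) : ℝ :=
  (a + 1) * Real.Gamma (2 * a + 1) * Real.Gamma ((k : ℝ) + a) /
    (Real.Gamma (a + 1) * Real.Gamma ((k : ℝ) + 2 * a))

lemma cseq_pos (a : ℝ) (ha : 0 < a) (k : ℕ) : 0 < cseq a k := by
  unfold cseq
  have h1 : 0 < Real.Gamma (2*a+1) := Real.Gamma_pos_of_pos (by linarith)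
  have h2 : 0 < Real.Gamma ((k:ℝ)+a) := Real.Gamma_pos_of_pos (by positivity)
  have h3 : 0 < Real.Gamma (a+1) := Real.Gamma_pos_of_pos (by linarith)
  have h4 : 0 < Real.Gamma ((k:ℝ)+2*a) := Real.Gamma_pos_of_pos (by positivity)
  positivity

lemma cseq_one (a : ℝ) (ha : 0 < a) : cseq a 1 = a + 1 := by
  unfold cseq
  have h3 : Real.Gamma (a+1) ≠ 0 := (Real.Gamma_pos_of_pos (by linarith)).ne'
  have h1 : Real.Gamma (2*a+1) ≠ 0 := (Real.Gamma_pos_of_pos (by linarith)).ne'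
  rw [show ((1:ℕ):ℝ) + a = a + 1 by push_cast; ring,
    show ((1:ℕ):ℝ) + 2*a = 2*a + 1 by push_cast; ring]
  field_simp

lemma cseq_succ (a : ℝ) (ha : 0 < a) (k : ℕ) :
    cseq a k * ((k : ℝ) + a) = cseq a (k+1) * ((k : ℝ) + 2*a) := by
  unfold cseq
  have h1 : 0 < Real.Gamma (2*a+1) := Real.Gamma_pos_of_pos (by linarith)
  have h2 : 0 < Real.Gamma ((k:ℝ)+a) := Real.Gamma_pos_of_pos (by positivity)
  have h3 : 0 < Real.Gamma (a+1) := Real.Gamma_pos_of_pos (by linarith)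
  have h4 : 0 < Real.Gamma ((k:ℝ)+2*a) := Real.Gamma_pos_of_pos (by positivity)
  have e1 : Real.Gamma (((k+1:ℕ):ℝ) + a) = ((k:ℝ) + a) * Real.Gamma ((k:ℝ)+a) := by
    rw [show ((k+1:ℕ):ℝ) + a = ((k:ℝ) + a) + 1 by push_cast; ring,
      Real.Gamma_add_one (by positivity)]
  have e2 : Real.Gamma (((k+1:ℕ):ℝ) + 2*a) = ((k:ℝ) + 2*a) * Real.Gamma ((k:ℝ)+2*a) := by
    rw [show ((k+1:ℕ):ℝ) + 2*a = ((k:ℝ) + 2*a) + 1 by push_cast; ring,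
      Real.Gamma_add_one (by positivity)]
  rw [e1, e2]
  have h5 : (0:ℝ) < (k:ℝ) + 2*a := by positivity
  field_simp

theorem F_asymptotic (a : ℝ) (ha : 0 < a) (F : ℕ → ℕ → ℝ)
    (h1 : ∀ i : ℕ, F i 1 = (i : ℝ) * (1 + a))
    (hzero : ∀ k : ℕ, 2 ≤ k → ∀ i : ℕ, i < k - 1 → F i k = 0)
    (hrec : ∀ k : ℕ, 2 ≤ k → ∀ i : ℕ,
      F (i + 1) k = F i k * (1 - ((k : ℝ) - 2 + a) / ((a + 1) * (i : ℝ) + a)) +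
        F i (k - 1) * (((k : ℝ) - 1 + a) / ((a + 1) * (i : ℝ) + a))) :
    ∃ C > 0, ∀ n k : ℕ, 1 ≤ n → 1 ≤ k →
      |F n k - (a + 1) * Real.Gamma (2 * a + 1) * Real.Gamma ((k : ℝ) + a) /
          (Real.Gamma (a + 1) * Real.Gamma ((k : ℝ) + 2 * a)) * (n : ℝ)| ≤
        (a + 1) * Real.Gamma (2 * a + 1) * Real.Gamma ((k : ℝ) + a) /
            (Real.Gamma (a + 1) * Real.Gamma ((k : ℝ) + 2 * a)) *
          (C * ((k : ℝ) - 1) ^ (1 + a)) := by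
  have key : ∀ k : ℕ, 1 ≤ k → ∀ i : ℕ, |F i k - cseq a k * i| ≤ cseq a k * Mb a k := by
    intro k hk
    induction k, hk using Nat.le_induction with
    | base =>
      intro i
      rw [h1 i, cseq_one a ha]
      rw [show (i:ℝ) * (1+a) - (a+1) * (i:ℝ) = 0 by ring]
      simp [Mb]
    | succ k hk ih =>
      intro i
      induction i with
      | zero =>
        rw [hzero (k+1) (by omega) 0 (by omega)]
        have : (0:ℝ) - cseq a (k+1) * ((0:ℕ):ℝ) = 0 := by simp
        rw [this, abs_zero]
        exact mul_nonneg (cseq_pos a ha _).le (Mb_nonneg a ha _)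
      | succ i ihi =>
        by_cases hik : i + 1 < k
        · rw [hzero (k+1) (by omega) (i+1) (by omega)]
          have hnn : (0:ℝ) ≤ cseq a (k+1) * ((i+1:ℕ):ℝ) := by
            have := (cseq_pos a ha (k+1)).le
            positivity
          rw [show (0:ℝ) - cseq a (k+1) * ((i+1:ℕ):ℝ)
              = -(cseq a (k+1) * ((i+1:ℕ):ℝ)) by ring, abs_neg, abs_of_nonneg hnn]
          apply mul_le_mul_of_nonneg_left _ (cseq_pos a ha _).le
          calc ((i+1:ℕ):ℝ) ≤ (k:ℝ) := by exact_mod_cast hik.le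
            _ ≤ Mb a (k+1) := Mb_lb a ha k
        · push_neg at hik
          have hD : (0:ℝ) < (a+1) * (i:ℝ) + a := by positivity
          have hFi := hrec (k+1) (by omega) i
          simp only [Nat.add_sub_cancel] at hFi
          have hcast1 : ((k+1:ℕ):ℝ) - 2 + a = (k:ℝ) - 1 + a := by push_cast; ring
          have hcast2 : ((k+1:ℕ):ℝ) - 1 + a = (k:ℝ) + a := by push_cast; ring
          rw [hcast1, hcast2] at hFi
          -- division-free recurrence
          have hFi' : F (i+1) (k+1) * ((a+1) * (i:ℝ) + a) =
              F i (k+1) * (((a+1) * (i:ℝ) + a) - ((k:ℝ) - 1 + a)) +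
              F i k * ((k:ℝ) + a) := by
            rw [hFi]
            field_simp
            try ring
          have hcc := cseq_succ a ha k
          have hMr : Mb a (k+1) * ((k:ℝ) - 1 + a) = Mb a k * ((k:ℝ) + 2*a) + a := by
            obtain ⟨j, rfl⟩ : ∃ j, k = j + 1 := ⟨k - 1, by omega⟩
            have hh := Mb_rec a ha j
            push_cast
            push_cast at hh
            linarith [hh]
          have hid : (F (i+1) (k+1) - cseq a (k+1) * ((i:ℝ)+1)) * ((a+1) * (i:ℝ) + a) =
              (F i (k+1) - cseq a (k+1) * i) * (((a+1) * (i:ℝ) + a) - ((k:ℝ) - 1 + a)) +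
              (F i k - cseq a k * i) * ((k:ℝ) + a) - cseq a (k+1) * a := by
            linear_combination hFi' + (i:ℝ) * hcc
          have hδ : (0:ℝ) ≤ ((a+1) * (i:ℝ) + a) - ((k:ℝ) - 1 + a) := by
            have hki : (k:ℝ) ≤ (i:ℝ) + 1 := by exact_mod_cast hik
            nlinarith [Nat.cast_nonneg (α := ℝ) i]
          have hka : (0:ℝ) ≤ (k:ℝ) + a := by positivity
          have hcKa : (0:ℝ) ≤ cseq a (k+1) * a := by
            have := (cseq_pos a ha (k+1)).le; positivity
          have habs : |(F (i+1) (k+1) - cseq a (k+1) * ((i:ℝ)+1)) * ((a+1) * (i:ℝ) + a)| ≤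
              cseq a (k+1) * Mb a (k+1) * ((a+1) * (i:ℝ) + a) := by
            rw [hid]
            calc |(F i (k+1) - cseq a (k+1) * i) * (((a+1) * (i:ℝ) + a) - ((k:ℝ) - 1 + a)) +
                  (F i k - cseq a k * i) * ((k:ℝ) + a) - cseq a (k+1) * a|
                ≤ |(F i (k+1) - cseq a (k+1) * i) * (((a+1) * (i:ℝ) + a) - ((k:ℝ) - 1 + a))| +
                  |(F i k - cseq a k * i) * ((k:ℝ) + a)| + |-(cseq a (k+1) * a)| := by
                  rw [sub_eq_add_neg]
                  exact abs_add_three _ _ _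
              _ = |F i (k+1) - cseq a (k+1) * i| * (((a+1) * (i:ℝ) + a) - ((k:ℝ) - 1 + a)) +
                  |F i k - cseq a k * i| * ((k:ℝ) + a) + cseq a (k+1) * a := by
                  rw [abs_mul, abs_mul, abs_of_nonneg hδ, abs_of_nonneg hka, abs_neg,
                    abs_of_nonneg hcKa]
              _ ≤ cseq a (k+1) * Mb a (k+1) * (((a+1) * (i:ℝ) + a) - ((k:ℝ) - 1 + a)) +
                  cseq a k * Mb a k * ((k:ℝ) + a) + cseq a (k+1) * a := by
                  exact add_le_add (add_le_add
                    (mul_le_mul_of_nonneg_right ihi hδ)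
                    (mul_le_mul_of_nonneg_right (ih i) hka)) le_rfl
              _ = cseq a (k+1) * Mb a (k+1) * ((a+1) * (i:ℝ) + a) := by
                  linear_combination (-(cseq a (k+1))) * hMr + Mb a k * hcc
          have heq : |F (i+1) (k+1) - cseq a (k+1) * ((i:ℝ)+1)| * ((a+1) * (i:ℝ) + a)
              = |(F (i+1) (k+1) - cseq a (k+1) * ((i:ℝ)+1)) * ((a+1) * (i:ℝ) + a)| := by
            rw [abs_mul, abs_of_pos hD]
          have hfin := le_of_mul_le_mul_right (heq.le.trans habs) hD
          have : ((i+1:ℕ):ℝ) = (i:ℝ) + 1 := by push_cast; ring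
          rw [this]
          exact hfin
  refine ⟨1, one_pos, fun n k hn hk => ?_⟩
  have hspec := key k hk n
  have hc : (a + 1) * Real.Gamma (2 * a + 1) * Real.Gamma ((k : ℝ) + a) /
      (Real.Gamma (a + 1) * Real.Gamma ((k : ℝ) + 2 * a)) = cseq a k := rfl
  rw [hc]
  refine hspec.trans ?_
  apply mul_le_mul_of_nonneg_left _ (cseq_pos a ha k).le
  rw [one_mul]
  obtain ⟨j, rfl⟩ : ∃ j, k = j + 1 := ⟨k - 1, by omega⟩
  have hub := Mb_ub a ha j
  have hcast : (((j+1:ℕ):ℝ) - 1) = (j:ℝ) := by push_cast; ring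
  rw [hcast]
  exact hub
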